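/- Let a, c > 0 and q a positive integer, and define Λ(z) = Γ(a)·∑_{n≥0} (-1)ⁿcⁿ(2n+1)² zⁿ/(n! Γ(qn+a)). If Λ(z) = ∏_{n≥1}(1 - z/ϱₙ) with positive zeros ϱₙ and ∑1/ϱₙ < ∞, then the Euler–Rayleigh sums satisfy μ₁ = 9cΓ(a)/Γ(q+a) and μ₂ = 81c²Γ(a)²/Γ(q+a)² - 25c²Γ(a)/Γ(2q+a). -/

import Mathlib

set_option maxHeartbeats 1000000

open Finset Filter Topology

lemma aux_sq (x : ℕ → ℝ) (hx0 : ∀ i, 0 ≤ x i) (n : ℕ) :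
    ∑ i ∈ Finset.range n, x i ^ 2 ≤ (∑ i ∈ Finset.range n, x i) ^ 2 := by
  induction n with
  | zero => simp
  | succ n ih =>
    rw [Finset.sum_range_succ, Finset.sum_range_succ]
    have hs : 0 ≤ ∑ i ∈ Finset.range n, x i :=
      Finset.sum_nonneg fun i _ => hx0 i
    nlinarith [hx0 n]

lemma aux_upper (x : ℕ → ℝ) (hx0 : ∀ i, 0 ≤ x i) (hx1 : ∀ i, x i ≤ 1) (n : ℕ) :
    ∏ i ∈ Finset.range n, (1 - x i) ≤
      1 - (∑ i ∈ Finset.range n, x i) +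
        ((∑ i ∈ Finset.range n, x i) ^ 2 - ∑ i ∈ Finset.range n, x i ^ 2) / 2 := by
  induction n with
  | zero => simp
  | succ n ih =>
    rw [Finset.sum_range_succ, Finset.sum_range_succ, Finset.prod_range_succ]
    have h1 : (∏ i ∈ Finset.range n, (1 - x i)) * (1 - x n) ≤
        (1 - (∑ i ∈ Finset.range n, x i) +
          ((∑ i ∈ Finset.range n, x i) ^ 2 - ∑ i ∈ Finset.range n, x i ^ 2) / 2) * (1 - x n) :=
      mul_le_mul_of_nonneg_right ih (by linarith [hx1 n])
    have h2 := aux_sq x hx0 n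
    nlinarith [hx0 n, mul_nonneg (hx0 n) (sub_nonneg.mpr h2)]

lemma aux_lower (x : ℕ → ℝ) (hx0 : ∀ i, 0 ≤ x i) (hx1 : ∀ i, x i ≤ 1) (n : ℕ) :
    1 - (∑ i ∈ Finset.range n, x i) +
        ((∑ i ∈ Finset.range n, x i) ^ 2 - ∑ i ∈ Finset.range n, x i ^ 2) / 2 -
        (∑ i ∈ Finset.range n, x i) ^ 3 / 6 ≤
      ∏ i ∈ Finset.range n, (1 - x i) := by
  induction n with
  | zero => simp
  | succ n ih =>
    rw [Finset.sum_range_succ, Finset.sum_range_succ, Finset.prod_range_succ]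
    have hs : 0 ≤ ∑ i ∈ Finset.range n, x i := Finset.sum_nonneg fun i _ => hx0 i
    have ht : 0 ≤ ∑ i ∈ Finset.range n, x i ^ 2 := Finset.sum_nonneg fun i _ => sq_nonneg _
    have h1 : (1 - (∑ i ∈ Finset.range n, x i) +
          ((∑ i ∈ Finset.range n, x i) ^ 2 - ∑ i ∈ Finset.range n, x i ^ 2) / 2 -
          (∑ i ∈ Finset.range n, x i) ^ 3 / 6) * (1 - x n) ≤
        (∏ i ∈ Finset.range n, (1 - x i)) * (1 - x n) :=
      mul_le_mul_of_nonneg_right ih (by linarith [hx1 n])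
    nlinarith [hx0 n, mul_nonneg (hx0 n) ht, mul_nonneg hs (sq_nonneg (x n)),
      mul_nonneg (hx0 n) (pow_nonneg hs 3), pow_nonneg (hx0 n) 3]

lemma aux_zero (δ M α : ℝ) (hδ : 0 < δ) (h : ∀ z ∈ Set.Ioc (0:ℝ) δ, |α| ≤ M * z) : α = 0 := by
  have h1 : Tendsto (fun z : ℝ => M * z) (𝓝[>] (0:ℝ)) (𝓝 0) := by
    have : Tendsto (fun z : ℝ => M * z) (𝓝 (0:ℝ)) (𝓝 (M * 0)) :=
      (continuous_const.mul continuous_id).tendsto 0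
    simpa using this.mono_left nhdsWithin_le_nhds
  have h2 : ∀ᶠ z in 𝓝[>] (0:ℝ), |α| ≤ M * z := by
    filter_upwards [Ioc_mem_nhdsGT_of_mem (by simp [hδ] : (0:ℝ) ∈ Set.Ico (0:ℝ) δ)] with z hz
      using h z hz
  have := ge_of_tendsto h1 h2
  exact abs_eq_zero.mp (le_antisymm this (abs_nonneg _))

lemma aux_gamma (a : ℝ) (ha : 0 < a) (m : ℕ) (hm : 1 ≤ m) :
    Real.Gamma a * a ≤ Real.Gamma (a + m) := by
  induction m, hm using Nat.le_induction with
  | base => rw [Nat.cast_one, Real.Gamma_add_one ha.ne', mul_comm]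
  | succ n hn ih =>
    have hpos : 0 < a + n := by positivity
    have h1 : Real.Gamma (a + (n + 1 : ℕ)) = (a + n) * Real.Gamma (a + n) := by
      push_cast
      rw [show a + ((n : ℝ) + 1) = (a + n) + 1 by ring, Real.Gamma_add_one hpos.ne']
    rw [h1]
    have hΓ : 0 < Real.Gamma (a + n) := Real.Gamma_pos_of_pos hpos
    have hn1 : (1:ℝ) ≤ a + n := by
      have : (1:ℝ) ≤ (n:ℝ) := by exact_mod_cast hn
      linarith
    nlinarith

lemma aux_nine (n : ℕ) (hn : 1 ≤ n) : (2 * (n:ℝ) + 1) ^ 2 ≤ 9 ^ n := by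
  induction n, hn using Nat.le_induction with
  | base => norm_num
  | succ n hn ih =>
    have hn0 : (0:ℝ) ≤ (n:ℝ) := Nat.cast_nonneg n
    have h9 : (9:ℝ) ^ (n + 1) = 9 * 9 ^ n := by ring
    push_cast
    rw [h9]
    nlinarith

theorem stmt_17 (q : ℕ) (hq : 1 ≤ q) (a c : ℝ) (ha : 0 < a) (hc : 0 < c)
    (Λ : ℝ → ℝ)
    (hΛ : ∀ z : ℝ, Λ z =
      Real.Gamma a *
        ∑' n : ℕ, (-1) ^ n * c ^ n * (2 * n + 1) ^ 2 * z ^ n /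
          ((n.factorial : ℝ) * Real.Gamma ((q : ℝ) * n + a)))
    (ϱ : ℕ → ℝ) (hpos : ∀ n, 0 < ϱ n) (hsum : Summable fun n => 1 / ϱ n)
    (hprod : ∀ z : ℝ, Λ z = ∏' n : ℕ, (1 - z / ϱ n)) :
    (∑' n : ℕ, 1 / ϱ n) = 9 * c * Real.Gamma a / Real.Gamma ((q : ℝ) + a) ∧
    (∑' n : ℕ, (1 / ϱ n) ^ 2) =
      81 * c ^ 2 * Real.Gamma a ^ 2 / Real.Gamma ((q : ℝ) + a) ^ 2 -
        25 * c ^ 2 * Real.Gamma a / Real.Gamma (2 * (q : ℝ) + a) := by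
  have hΓa : 0 < Real.Gamma a := Real.Gamma_pos_of_pos ha
  set g : ℕ → ℝ := fun n =>
    Real.Gamma a * ((-1) ^ n * c ^ n * (2 * (n:ℝ) + 1) ^ 2 /
      ((n.factorial : ℝ) * Real.Gamma ((q : ℝ) * n + a))) with hgdef
  have hΓd : ∀ n : ℕ, 0 < Real.Gamma ((q : ℝ) * n + a) := fun n =>
    Real.Gamma_pos_of_pos (by positivity)
  have hΛg : ∀ z : ℝ, Λ z = ∑' n : ℕ, g n * z ^ n := by
    intro z
    rw [hΛ z, ← tsum_mul_left]
    exact tsum_congr fun n => by rw [hgdef]; ring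
  -- coefficient values
  have hg0 : g 0 = 1 := by
    rw [hgdef]
    norm_num
    exact mul_inv_cancel₀ hΓa.ne'
  have hg1 : g 1 = -(9 * c * Real.Gamma a / Real.Gamma ((q : ℝ) + a)) := by
    rw [hgdef]
    norm_num
    ring
  have hg2 : g 2 = 25 * c ^ 2 * Real.Gamma a / (2 * Real.Gamma (2 * (q : ℝ) + a)) := by
    rw [hgdef]
    norm_num
    rw [show (q : ℝ) * 2 + a = 2 * (q : ℝ) + a by ring]
    ring
  -- coefficient bound
  have key1 : ∀ n : ℕ, 1 ≤ n → |g n| ≤ (9 * c) ^ n / (a * n.factorial) := by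
    intro n hn
    have hfac : (0:ℝ) < (n.factorial : ℝ) := by exact_mod_cast n.factorial_pos
    have habs : |g n| = Real.Gamma a * (c ^ n * (2 * (n:ℝ) + 1) ^ 2 /
        ((n.factorial : ℝ) * Real.Gamma ((q : ℝ) * n + a))) := by
      rw [hgdef]
      simp only [abs_mul, abs_div, abs_pow, abs_neg, abs_one, one_pow, one_mul]
      rw [abs_of_pos hΓa, abs_of_pos hc, abs_of_pos hfac, abs_of_pos (hΓd n),
        abs_of_nonneg (by positivity : (0:ℝ) ≤ 2 * (n:ℝ) + 1)]
    have hγ : Real.Gamma a * a ≤ Real.Gamma ((q : ℝ) * n + a) := by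
      have h1 : 1 ≤ q * n := Nat.one_le_iff_ne_zero.mpr (by positivity)
      have := aux_gamma a ha (q * n) h1
      rwa [show a + ((q * n : ℕ) : ℝ) = (q : ℝ) * n + a by push_cast; ring] at this
    have h9 := aux_nine n hn
    rw [habs]
    have hd : 0 < (n.factorial : ℝ) * (Real.Gamma a * a) := by positivity
    calc Real.Gamma a * (c ^ n * (2 * (n:ℝ) + 1) ^ 2 /
          ((n.factorial : ℝ) * Real.Gamma ((q : ℝ) * n + a)))
        ≤ Real.Gamma a * (c ^ n * 9 ^ n / ((n.factorial : ℝ) * (Real.Gamma a * a))) := by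
          gcongr
      _ = (9 * c) ^ n / (a * n.factorial) := by
          rw [mul_pow]
          field_simp
  -- basic facts about the zeros
  have hr0 : ∀ n : ℕ, 0 ≤ 1 / ϱ n := fun n => (one_div_pos.mpr (hpos n)).le
  have hle_e1 : ∀ n : ℕ, 1 / ϱ n ≤ ∑' k, 1 / ϱ k := fun n =>
    Summable.le_tsum hsum n fun j _ => hr0 j
  set e1 : ℝ := ∑' n : ℕ, 1 / ϱ n with he1def
  set m2 : ℝ := ∑' n : ℕ, (1 / ϱ n) ^ 2 with hm2def
  have he1 : 0 < e1 := lt_of_lt_of_le (by have := hpos 0; positivity : (0:ℝ) < 1 / ϱ 0) (hle_e1 0)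
  have hsum2 : Summable fun n : ℕ => (1 / ϱ n) ^ 2 :=
    Summable.of_nonneg_of_le (fun n => sq_nonneg _)
      (fun n => by nlinarith [hr0 n, hle_e1 n]) (hsum.mul_left e1)
  set δ : ℝ := min 1 (1 / (2 * e1)) with hδdef
  have hδ : 0 < δ := lt_min one_pos (by have := he1; positivity)
  have hδ1 : δ ≤ 1 := min_le_left _ _
  have hδ2 : δ ≤ 1 / (2 * e1) := min_le_right _ _
  -- summability of the coefficient tail
  have hgs : Summable fun n : ℕ => |g (n + 3)| := by
    apply Summable.of_nonneg_of_le (fun n => abs_nonneg _) (fun n => ?_)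
      ((Real.summable_pow_div_factorial (9 * c)).mul_left ((9 * c) ^ 3 / a))
    have h1 := key1 (n + 3) (by omega)
    have h2 : ((n.factorial : ℝ)) ≤ ((n + 3).factorial : ℝ) := by
      exact_mod_cast Nat.factorial_le (by omega)
    have hf0 : (0:ℝ) < (n.factorial : ℝ) := by exact_mod_cast n.factorial_pos
    calc |g (n + 3)| ≤ (9 * c) ^ (n + 3) / (a * (n + 3).factorial) := h1
      _ ≤ (9 * c) ^ (n + 3) / (a * n.factorial) := by gcongr
      _ = (9 * c) ^ 3 / a * ((9 * c) ^ n / n.factorial) := by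
          rw [pow_add]
          field_simp
  set C : ℝ := ∑' n : ℕ, |g (n + 3)| with hCdef
  have hC0 : 0 ≤ C := tsum_nonneg fun n => abs_nonneg _
  -- series-side estimate
  have hseries : ∀ z ∈ Set.Ioc (0:ℝ) δ,
      |Λ z - (g 0 + g 1 * z + g 2 * z ^ 2)| ≤ C * z ^ 3 := by
    intro z hz
    obtain ⟨hz0, hzδ⟩ := hz
    have hz1 : z ≤ 1 := hzδ.trans hδ1
    have hsumz : Summable fun n : ℕ => g n * z ^ n := by
      rw [← summable_nat_add_iff 1]
      apply Summable.of_abs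
      apply Summable.of_nonneg_of_le (fun n => abs_nonneg _) (fun n => ?_)
        ((Real.summable_pow_div_factorial (9 * c * z)).mul_left (9 * c * z / a))
      have h1 := key1 (n + 1) (by omega)
      have hf0 : (0:ℝ) < (n.factorial : ℝ) := by exact_mod_cast n.factorial_pos
      have h2 : ((n.factorial : ℝ)) ≤ ((n + 1).factorial : ℝ) := by
        exact_mod_cast Nat.factorial_le (by omega)
      calc |g (n + 1) * z ^ (n + 1)| = |g (n + 1)| * z ^ (n + 1) := by
            rw [abs_mul, abs_pow, abs_of_pos hz0]
        _ ≤ (9 * c) ^ (n + 1) / (a * (n + 1).factorial) * z ^ (n + 1) := by gcongr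
        _ ≤ (9 * c) ^ (n + 1) / (a * n.factorial) * z ^ (n + 1) := by gcongr
        _ = 9 * c * z / a * ((9 * c * z) ^ n / n.factorial) := by
            rw [pow_succ, mul_pow, mul_pow, pow_succ]
            field_simp
            ring
    have hsplit := Summable.sum_add_tsum_nat_add 3 hsumz
    have hrange : ∑ i ∈ Finset.range 3, g i * z ^ i = g 0 + g 1 * z + g 2 * z ^ 2 := by
      simp [Finset.sum_range_succ]
    have htail : Summable fun n : ℕ => g (n + 3) * z ^ (n + 3) :=
      (summable_nat_add_iff (f := fun n : ℕ => g n * z ^ n) 3).mpr hsumz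
    have hbound : ∀ n : ℕ, |g (n + 3) * z ^ (n + 3)| ≤ |g (n + 3)| * z ^ 3 := by
      intro n
      rw [abs_mul, abs_pow, abs_of_pos hz0, show n + 3 = 3 + n by ring, pow_add]
      have hzn : z ^ n ≤ 1 := pow_le_one₀ hz0.le hz1
      calc |g (3 + n)| * (z ^ 3 * z ^ n) ≤ |g (3 + n)| * (z ^ 3 * 1) := by
            gcongr
        _ = |g (3 + n)| * z ^ 3 := by rw [mul_one]
    have hsumabs : Summable fun n : ℕ => |g (n + 3) * z ^ (n + 3)| :=
      Summable.of_nonneg_of_le (fun n => abs_nonneg _) hbound (hgs.mul_right (z ^ 3))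
    rw [hΛg z, ← hsplit, hrange, add_sub_cancel_left]
    calc |∑' n : ℕ, g (n + 3) * z ^ (n + 3)|
        ≤ ∑' n : ℕ, |g (n + 3) * z ^ (n + 3)| := by
          have h := norm_tsum_le_tsum_norm (f := fun n : ℕ => g (n + 3) * z ^ (n + 3))
            hsumabs
          exact h
      _ ≤ ∑' n : ℕ, |g (n + 3)| * z ^ 3 := Summable.tsum_le_tsum hbound hsumabs (hgs.mul_right (z ^ 3))
      _ = C * z ^ 3 := by rw [tsum_mul_right]
  -- product-side estimate
  have hproduct : ∀ z ∈ Set.Ioc (0:ℝ) δ,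
      (1 - z * e1 + ((z * e1) ^ 2 - z ^ 2 * m2) / 2 - (z * e1) ^ 3 / 6 ≤ Λ z ∧
        Λ z ≤ 1 - z * e1 + ((z * e1) ^ 2 - z ^ 2 * m2) / 2) := by
    intro z hz
    obtain ⟨hz0, hzδ⟩ := hz
    set x : ℕ → ℝ := fun n => z * (1 / ϱ n) with hxdef
    have hx0 : ∀ i, 0 ≤ x i := fun i => mul_nonneg hz0.le (hr0 i)
    have hxh : ∀ i, x i ≤ 1 / 2 := by
      intro i
      have h1 : x i ≤ z * e1 := mul_le_mul_of_nonneg_left (hle_e1 i) hz0.le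
      have h2 : z * e1 ≤ (1 / (2 * e1)) * e1 :=
        mul_le_mul_of_nonneg_right (hzδ.trans hδ2) he1.le
      have h3 : (1 / (2 * e1)) * e1 = 1 / 2 := by field_simp
      linarith
    have hx1 : ∀ i, x i ≤ 1 := fun i => (hxh i).trans (by norm_num)
    have hxpos : ∀ i, 0 < 1 - x i := fun i => by linarith [hxh i]
    have hxs : Summable x := hsum.mul_left z
    have hlog : Summable fun n => Real.log (1 - x n) := by
      have hcmp : ∀ n, -Real.log (1 - x n) ≤ 2 * z * (1 / ϱ n) := by
        intro n
        have h1 : -Real.log (1 - x n) = Real.log (1 - x n)⁻¹ := (Real.log_inv _).symm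
        have h2 : Real.log (1 - x n)⁻¹ ≤ (1 - x n)⁻¹ - 1 :=
          Real.log_le_sub_one_of_pos (inv_pos.mpr (hxpos n))
        have h3 : (1 - x n)⁻¹ - 1 ≤ 2 * x n := by
          have hinv : (1 - x n) * (1 - x n)⁻¹ = 1 := mul_inv_cancel₀ (hxpos n).ne'
          have hinvpos : 0 < (1 - x n)⁻¹ := inv_pos.mpr (hxpos n)
          nlinarith [hx0 n, hxh n]
        have h4 : 2 * x n = 2 * z * (1 / ϱ n) := by simp only [hxdef]; ring
        linarith
      have hnn : ∀ n, 0 ≤ -Real.log (1 - x n) := fun n =>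
        neg_nonneg.mpr (Real.log_nonpos (by linarith [hx1 n]) (by linarith [hx0 n]))
      have hneg : Summable fun n => -Real.log (1 - x n) :=
        Summable.of_nonneg_of_le hnn hcmp (hsum.mul_left (2 * z))
      simpa using hneg.neg
    have hmult : Multipliable fun n => 1 - x n :=
      Real.multipliable_of_summable_log (fun n => hxpos n) hlog
    have hΛz : HasProd (fun n => 1 - x n) (Λ z) := by
      have h := hmult.hasProd
      have heq : (∏' n : ℕ, (1 - x n)) = Λ z := by
        rw [hprod z]
        exact tprod_congr fun n => by simp only [hxdef]; rw [mul_one_div]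
      rwa [heq] at h
    have htendP : Tendsto (fun n => ∏ i ∈ Finset.range n, (1 - x i)) atTop (𝓝 (Λ z)) :=
      hΛz.tendsto_prod_nat
    have htendS : Tendsto (fun n => ∑ i ∈ Finset.range n, x i) atTop (𝓝 (z * e1)) := by
      have h := hxs.hasSum.tendsto_sum_nat
      rwa [show ∑' n, x n = z * e1 from tsum_mul_left] at h
    have htendT : Tendsto (fun n => ∑ i ∈ Finset.range n, x i ^ 2) atTop (𝓝 (z ^ 2 * m2)) := by
      have h := (hsum2.mul_left (z ^ 2)).hasSum.tendsto_sum_nat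
      rw [show ∑' n : ℕ, z ^ 2 * (1 / ϱ n) ^ 2 = z ^ 2 * m2 from tsum_mul_left] at h
      apply h.congr
      intro n
      exact Finset.sum_congr rfl fun i _ => by simp only [hxdef]; ring
    constructor
    · have hle : ∀ n : ℕ,
          1 - (∑ i ∈ Finset.range n, x i) +
            ((∑ i ∈ Finset.range n, x i) ^ 2 - ∑ i ∈ Finset.range n, x i ^ 2) / 2 -
            (∑ i ∈ Finset.range n, x i) ^ 3 / 6 ≤ ∏ i ∈ Finset.range n, (1 - x i) :=
        aux_lower x hx0 hx1
      have htendL : Tendsto (fun n => 1 - (∑ i ∈ Finset.range n, x i) +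
          ((∑ i ∈ Finset.range n, x i) ^ 2 - ∑ i ∈ Finset.range n, x i ^ 2) / 2 -
          (∑ i ∈ Finset.range n, x i) ^ 3 / 6) atTop
          (𝓝 (1 - z * e1 + ((z * e1) ^ 2 - z ^ 2 * m2) / 2 - (z * e1) ^ 3 / 6)) :=
        (((tendsto_const_nhds.sub htendS).add
          (((htendS.pow 2).sub htendT).div_const 2)).sub ((htendS.pow 3).div_const 6))
      exact le_of_tendsto_of_tendsto' htendL htendP hle
    · have hle : ∀ n : ℕ, ∏ i ∈ Finset.range n, (1 - x i) ≤
          1 - (∑ i ∈ Finset.range n, x i) +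
            ((∑ i ∈ Finset.range n, x i) ^ 2 - ∑ i ∈ Finset.range n, x i ^ 2) / 2 :=
        aux_upper x hx0 hx1
      have htendU : Tendsto (fun n => 1 - (∑ i ∈ Finset.range n, x i) +
          ((∑ i ∈ Finset.range n, x i) ^ 2 - ∑ i ∈ Finset.range n, x i ^ 2) / 2) atTop
          (𝓝 (1 - z * e1 + ((z * e1) ^ 2 - z ^ 2 * m2) / 2)) :=
        ((tendsto_const_nhds.sub htendS).add
          (((htendS.pow 2).sub htendT).div_const 2))
      exact le_of_tendsto_of_tendsto' htendP htendU hle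
  -- combine the two estimates
  set K : ℝ := C + e1 ^ 3 / 6 with hKdef
  have hK0 : 0 ≤ K := by positivity
  have hcomb : ∀ z ∈ Set.Ioc (0:ℝ) δ,
      |(g 1 + e1) * z + (g 2 - (e1 ^ 2 - m2) / 2) * z ^ 2| ≤ K * z ^ 3 := by
    intro z hz
    have h1 := hseries z hz
    have h2 := hproduct z hz
    obtain ⟨hz0, hzδ⟩ := hz
    rw [hg0] at h1
    have h3 : |Λ z - (1 - e1 * z + ((e1 ^ 2 - m2) / 2) * z ^ 2)| ≤ e1 ^ 3 / 6 * z ^ 3 := by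
      rw [abs_le]
      constructor <;> nlinarith [h2.1, h2.2]
    calc |(g 1 + e1) * z + (g 2 - (e1 ^ 2 - m2) / 2) * z ^ 2|
        = |(Λ z - (1 - e1 * z + ((e1 ^ 2 - m2) / 2) * z ^ 2)) +
            -(Λ z - (1 + g 1 * z + g 2 * z ^ 2))| := by
          rw [show (g 1 + e1) * z + (g 2 - (e1 ^ 2 - m2) / 2) * z ^ 2 =
            (Λ z - (1 - e1 * z + ((e1 ^ 2 - m2) / 2) * z ^ 2)) +
            -(Λ z - (1 + g 1 * z + g 2 * z ^ 2)) from by ring]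
      _ ≤ |Λ z - (1 - e1 * z + ((e1 ^ 2 - m2) / 2) * z ^ 2)| +
            |-(Λ z - (1 + g 1 * z + g 2 * z ^ 2))| := abs_add_le _ _
      _ ≤ K * z ^ 3 := by rw [abs_neg]; rw [hKdef]; nlinarith [h1, h3]
  -- first coefficient
  have hα : g 1 + e1 = 0 := by
    apply aux_zero δ (K * δ + |g 2 - (e1 ^ 2 - m2) / 2|) _ hδ
    intro z hz
    obtain ⟨hz0, hzδ⟩ := hz
    have h1 := hcomb z ⟨hz0, hzδ⟩
    have h2 := abs_add_le ((g 1 + e1) * z + (g 2 - (e1 ^ 2 - m2) / 2) * z ^ 2)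
      (-((g 2 - (e1 ^ 2 - m2) / 2) * z ^ 2))
    rw [add_neg_cancel_right, abs_neg] at h2
    have h3 : |(g 1 + e1) * z| = |g 1 + e1| * z := by rw [abs_mul, abs_of_pos hz0]
    have h4 : |(g 2 - (e1 ^ 2 - m2) / 2) * z ^ 2| = |g 2 - (e1 ^ 2 - m2) / 2| * z ^ 2 := by
      rw [abs_mul, abs_pow, abs_of_pos hz0]
    have h5 : |g 1 + e1| * z ≤ K * z ^ 3 + |g 2 - (e1 ^ 2 - m2) / 2| * z ^ 2 := by
      rw [← h3, ← h4] at *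
      linarith
    have h6 : |g 1 + e1| * z ≤ ((K * δ + |g 2 - (e1 ^ 2 - m2) / 2|) * z) * z := by
      have hzz : z ^ 2 ≤ δ * z := by nlinarith
      have hzz3 : z ^ 3 ≤ δ * z ^ 2 := by nlinarith
      have hK3 : K * z ^ 3 ≤ K * (δ * z ^ 2) := mul_le_mul_of_nonneg_left hzz3 hK0
      calc |g 1 + e1| * z ≤ K * z ^ 3 + |g 2 - (e1 ^ 2 - m2) / 2| * z ^ 2 := h5
        _ ≤ K * (δ * z ^ 2) + |g 2 - (e1 ^ 2 - m2) / 2| * z ^ 2 :=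
            add_le_add_left hK3 _
        _ = ((K * δ + |g 2 - (e1 ^ 2 - m2) / 2|) * z) * z := by ring
    exact le_of_mul_le_mul_right (by linarith) hz0
  -- second coefficient
  have hβ : g 2 - (e1 ^ 2 - m2) / 2 = 0 := by
    apply aux_zero δ K _ hδ
    intro z hz
    obtain ⟨hz0, hzδ⟩ := hz
    have h1 := hcomb z ⟨hz0, hzδ⟩
    rw [hα, zero_mul, zero_add] at h1
    have h2 : |(g 2 - (e1 ^ 2 - m2) / 2) * z ^ 2| = |g 2 - (e1 ^ 2 - m2) / 2| * z ^ 2 := by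
      rw [abs_mul, abs_pow, abs_of_pos hz0]
    rw [h2] at h1
    have hz2 : 0 < z ^ 2 := by positivity
    have : |g 2 - (e1 ^ 2 - m2) / 2| * z ^ 2 ≤ (K * z) * z ^ 2 := by nlinarith
    exact le_of_mul_le_mul_right (by linarith) hz2
  -- conclude
  have hΓq : 0 < Real.Gamma ((q : ℝ) + a) := Real.Gamma_pos_of_pos (by positivity)
  have hΓ2q : 0 < Real.Gamma (2 * (q : ℝ) + a) := Real.Gamma_pos_of_pos (by positivity)
  have he1val : e1 = 9 * c * Real.Gamma a / Real.Gamma ((q : ℝ) + a) := by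
    rw [hg1] at hα
    linarith
  constructor
  · exact he1val
  · have hm2val : m2 = e1 ^ 2 - 2 * g 2 := by linarith
    rw [hm2val, he1val, hg2]
    rw [div_pow]
    field_simp
    ring
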